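/- Let R be a commutative ring, I an ideal of R, and P a prime ideal of R with I ⊄ P. Set P₀ = {(p, p+i) : p ∈ P, i ∈ I ∩ P}, P₁ = {(p, p+i) : p ∈ P, i ∈ I}, and P₂ = {(p+i, p) : p ∈ P, i ∈ I}. Then P₁ ≠ P₂, P₁ ∩ P₂ = P₀, and both localizations (R⋈I)_{P₁} and (R⋈I)_{P₂} are ring-isomorphic to the localization R_P of R at P. -/

import Mathlib

universe u

open scoped TensorProduct

namespace Paper

/-- The amalgamated duplication `R ⋈ I`, as the subring
`{(r, s) : s - r ∈ I} = {(r, r+i) : r ∈ R, i ∈ I}` of `R × R`. -/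
def dup (R : Type*) [CommRing R] (I : Ideal R) : Subring (R × R) where
  carrier := {p | p.2 - p.1 ∈ I}
  zero_mem' := by simp
  one_mem' := by simp
  add_mem' := by
    intro a b ha hb
    simp only [Set.mem_setOf_eq, Prod.fst_add, Prod.snd_add] at *
    have h : a.2 + b.2 - (a.1 + b.1) = (a.2 - a.1) + (b.2 - b.1) := by ring
    rw [h]; exact I.add_mem ha hb
  neg_mem' := by
    intro a ha
    simp only [Set.mem_setOf_eq, Prod.fst_neg, Prod.snd_neg] at *
    have h : -a.2 - -a.1 = -(a.2 - a.1) := by ring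
    rw [h]; exact I.neg_mem ha
  mul_mem' := by
    intro a b ha hb
    simp only [Set.mem_setOf_eq, Prod.fst_mul, Prod.snd_mul] at *
    have h : a.2 * b.2 - a.1 * b.1 = a.2 * (b.2 - b.1) + (a.2 - a.1) * b.1 := by ring
    rw [h]; exact I.add_mem (I.mul_mem_left _ hb) (I.mul_mem_right _ ha)

lemma mem_dup {R : Type*} [CommRing R] {I : Ideal R} {p : R × R} :
    p ∈ dup R I ↔ p.2 - p.1 ∈ I := Iff.rfl

/-- The diagonal embedding `R → R ⋈ I`, `r ↦ (r, r)`. -/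
def diag (R : Type*) [CommRing R] (I : Ideal R) : R →+* dup R I where
  toFun r := ⟨(r, r), mem_dup.mpr (by simp)⟩
  map_one' := rfl
  map_mul' _ _ := rfl
  map_zero' := rfl
  map_add' _ _ := rfl

noncomputable instance dupAlgebra (R : Type*) [CommRing R] (I : Ideal R) :
    Algebra R (dup R I) := (diag R I).toAlgebra

/-- `pdLE R n M` means that `M` has projective dimension `≤ n` as an `R`-module. -/
def pdLE (R : Type u) [CommRing R] : ℕ → (M : Type u) → [AddCommGroup M] → [Module R M] → Prop
  | 0, M, _, _ => Module.Projective R M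
  | (n + 1), M, _, _ => pdLE R n (LinearMap.ker (Finsupp.linearCombination R (id : M → M)))

/-- `fdLE R n M` means that `M` has flat dimension `≤ n` as an `R`-module. -/
def fdLE (R : Type u) [CommRing R] : ℕ → (M : Type u) → [AddCommGroup M] → [Module R M] → Prop
  | 0, M, _, _ => Module.Flat R M
  | (n + 1), M, _, _ => fdLE R n (LinearMap.ker (Finsupp.linearCombination R (id : M → M)))

/-- The projective dimension of an `R`-module `M`, as an element of `ℕ∞`. -/
noncomputable def projDim (R : Type u) [CommRing R] (M : Type u) [AddCommGroup M]
    [Module R M] : ℕ∞ :=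
  sInf {n : ℕ∞ | ∃ k : ℕ, (k : ℕ∞) = n ∧ pdLE R k M}

/-- The flat dimension of an `R`-module `M`, as an element of `ℕ∞`. -/
noncomputable def flatDim (R : Type u) [CommRing R] (M : Type u) [AddCommGroup M]
    [Module R M] : ℕ∞ :=
  sInf {n : ℕ∞ | ∃ k : ℕ, (k : ℕ∞) = n ∧ fdLE R k M}

/-- The global dimension of `R`: the supremum of projective dimensions of `R`-modules. -/
noncomputable def gldim (R : Type u) [CommRing R] : ℕ∞ :=
  ⨆ (M : Type u) (_ : AddCommGroup M) (_ : Module R M), projDim R M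

/-- The weak global dimension of `R`: the supremum of flat dimensions of `R`-modules. -/
noncomputable def wdim (R : Type u) [CommRing R] : ℕ∞ :=
  ⨆ (M : Type u) (_ : AddCommGroup M) (_ : Module R M), flatDim R M


/-- The first projection `R ⋈ I → R`, `(r, r+i) ↦ r`. -/
def dupFst (R : Type*) [CommRing R] (I : Ideal R) : dup R I →+* R :=
  (RingHom.fst R R).comp (dup R I).subtype

/-- The second projection `R ⋈ I → R`, `(r, r+i) ↦ r + i`. -/
def dupSnd (R : Type*) [CommRing R] (I : Ideal R) : dup R I →+* R :=
  (RingHom.snd R R).comp (dup R I).subtype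

/-- A commutative ring is von Neumann regular if every `a` satisfies `a = a²b` for some `b`. -/
def IsVNRegular (R : Type*) [CommRing R] : Prop := ∀ a : R, ∃ b : R, a = a * a * b

/-- A commutative ring is semihereditary if every finitely generated ideal is projective. -/
def IsSemihereditary (R : Type*) [CommRing R] : Prop :=
  ∀ J : Ideal R, J.FG → Module.Projective R J

/-- A commutative ring is coherent if every finitely generated ideal is finitely presented. -/
def IsCoherentRing (R : Type*) [CommRing R] : Prop :=
  ∀ J : Ideal R, J.FG → Module.FinitePresentation R J

/-- The content of a polynomial: the ideal generated by its coefficients. -/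
def contentIdeal {R : Type*} [CommRing R] (f : Polynomial R) : Ideal R :=
  Ideal.span (Set.range f.coeff)

/-- A commutative ring is Gaussian if `c(fg) = c(f)c(g)` for all polynomials `f, g`. -/
def IsGaussianRing (R : Type*) [CommRing R] : Prop :=
  ∀ f g : Polynomial R, contentIdeal (f * g) = contentIdeal f * contentIdeal g

/-- `R` is a `(1,d)`-ring if every finitely presented (i.e. `1`-presented) `R`-module has
projective dimension at most `d`. -/
def IsOneDRing (R : Type u) [CommRing R] (d : ℕ) : Prop :=
  ∀ (M : Type u) [AddCommGroup M] [Module R M],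
    Module.FinitePresentation R M → projDim R M ≤ (d : ℕ∞)

/-- The trace ideal of an `R`-module `M`: the sum of the images of all `R`-linear maps
`M → R`. -/
def traceIdeal (R : Type*) [CommRing R] (M : Type*) [AddCommGroup M] [Module R M] : Ideal R :=
  ⨆ f : M →ₗ[R] R, LinearMap.range f

section Aux

variable {R : Type u} [CommRing R] {I P : Ideal R} [P.IsPrime]

lemma mem_comap_fst {x : dup R I} :
    x ∈ P.comap (dupFst R I) ↔ (x : R × R).1 ∈ P := Iff.rfl

lemma mem_comap_snd {x : dup R I} :
    x ∈ P.comap (dupSnd R I) ↔ (x : R × R).2 ∈ P := Iff.rfl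

lemma loc_fst (a : R) (haI : a ∈ I) (haP : a ∉ P) :
    Nonempty (Localization.AtPrime (P.comap (dupFst R I)) ≃+* Localization.AtPrime P) := by
  haveI hQ : (P.comap (dupFst R I)).IsPrime := Ideal.IsPrime.comap _
  set Q := P.comap (dupFst R I) with hQdef
  let f : dup R I →+* Localization.AtPrime P := (algebraMap R _).comp (dupFst R I)
  letI : Algebra (dup R I) (Localization.AtPrime P) := f.toAlgebra
  haveI : IsLocalization Q.primeCompl (Localization.AtPrime P) := by
    constructor
    constructor
    · rintro ⟨x, hx⟩
      exact IsLocalization.map_units (M := P.primeCompl) _ ⟨(x : R × R).1, hx⟩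
    · intro z
      obtain ⟨⟨r, s⟩, hz⟩ := IsLocalization.surj P.primeCompl z
      have hn : ((a * r, (0 : R)) : R × R) ∈ dup R I := by
        simpa [mem_dup] using I.neg_mem (I.mul_mem_right r haI)
      have hd : ((a * (s : R), (0 : R)) : R × R) ∈ dup R I := by
        simpa [mem_dup] using I.neg_mem (I.mul_mem_right (s : R) haI)
      refine ⟨⟨⟨_, hn⟩, ⟨⟨_, hd⟩, P.primeCompl.mul_mem haP s.2⟩⟩, ?_⟩
      show z * (algebraMap R _ (a * (s : R))) = algebraMap R _ (a * r)
      rw [map_mul, map_mul, ← hz]; ring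
    · intro x y h
      have h' : algebraMap R (Localization.AtPrime P) (x : R × R).1
          = algebraMap R _ (y : R × R).1 := h
      obtain ⟨c, hc⟩ := (IsLocalization.eq_iff_exists P.primeCompl _).mp h'
      have hd : ((c * a, (0 : R)) : R × R) ∈ dup R I := by
        simpa [mem_dup] using I.neg_mem (I.mul_mem_left (c : R) haI)
      refine ⟨⟨⟨_, hd⟩, P.primeCompl.mul_mem c.2 haP⟩, ?_⟩
      ext
      · show (c : R) * a * (x : R × R).1 = (c : R) * a * (y : R × R).1
        calc (c : R) * a * (x : R × R).1 = a * ((c : R) * (x : R × R).1) := by ring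
          _ = a * ((c : R) * (y : R × R).1) := by rw [hc]
          _ = (c : R) * a * (y : R × R).1 := by ring
      · show (0 : R) * (x : R × R).2 = 0 * (y : R × R).2
        simp
  exact ⟨(IsLocalization.algEquiv Q.primeCompl (Localization.AtPrime Q)
    (Localization.AtPrime P)).toRingEquiv⟩

lemma loc_snd (a : R) (haI : a ∈ I) (haP : a ∉ P) :
    Nonempty (Localization.AtPrime (P.comap (dupSnd R I)) ≃+* Localization.AtPrime P) := by
  haveI hQ : (P.comap (dupSnd R I)).IsPrime := Ideal.IsPrime.comap _
  set Q := P.comap (dupSnd R I) with hQdef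
  let f : dup R I →+* Localization.AtPrime P := (algebraMap R _).comp (dupSnd R I)
  letI : Algebra (dup R I) (Localization.AtPrime P) := f.toAlgebra
  haveI : IsLocalization Q.primeCompl (Localization.AtPrime P) := by
    constructor
    constructor
    · rintro ⟨x, hx⟩
      exact IsLocalization.map_units (M := P.primeCompl) _ ⟨(x : R × R).2, hx⟩
    · intro z
      obtain ⟨⟨r, s⟩, hz⟩ := IsLocalization.surj P.primeCompl z
      have hn : (((0 : R), a * r) : R × R) ∈ dup R I := by
        simpa [mem_dup] using I.mul_mem_right r haI
      have hd : (((0 : R), a * (s : R)) : R × R) ∈ dup R I := by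
        simpa [mem_dup] using I.mul_mem_right (s : R) haI
      refine ⟨⟨⟨_, hn⟩, ⟨⟨_, hd⟩, P.primeCompl.mul_mem haP s.2⟩⟩, ?_⟩
      show z * (algebraMap R _ (a * (s : R))) = algebraMap R _ (a * r)
      rw [map_mul, map_mul, ← hz]; ring
    · intro x y h
      have h' : algebraMap R (Localization.AtPrime P) (x : R × R).2
          = algebraMap R _ (y : R × R).2 := h
      obtain ⟨c, hc⟩ := (IsLocalization.eq_iff_exists P.primeCompl _).mp h'
      have hd : (((0 : R), c * a) : R × R) ∈ dup R I := by
        simpa [mem_dup] using I.mul_mem_left (c : R) haI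
      refine ⟨⟨⟨_, hd⟩, P.primeCompl.mul_mem c.2 haP⟩, ?_⟩
      ext
      · show (0 : R) * (x : R × R).1 = 0 * (y : R × R).1
        simp
      · show (c : R) * a * (x : R × R).2 = (c : R) * a * (y : R × R).2
        calc (c : R) * a * (x : R × R).2 = a * ((c : R) * (x : R × R).2) := by ring
          _ = a * ((c : R) * (y : R × R).2) := by rw [hc]
          _ = (c : R) * a * (y : R × R).2 := by ring
  exact ⟨(IsLocalization.algEquiv Q.primeCompl (Localization.AtPrime Q)
    (Localization.AtPrime P)).toRingEquiv⟩

end Aux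

/-- D'Anna's localization lemma, case `I ⊄ P`: the sets `P₁ ≠ P₂`, `P₁ ∩ P₂ = P₀`
(where `P₁` and `P₂` are the prime ideals `(dupFst)⁻¹(P)` and `(dupSnd)⁻¹(P)` of `R ⋈ I`),
and the localizations of `R ⋈ I` at `P₁` and at `P₂` are both ring-isomorphic to `R_P`. -/
theorem dup_localization_of_not_le (R : Type u) [CommRing R] (I P : Ideal R) [P.IsPrime]
    (hIP : ¬ I ≤ P) :
    let P₀ : Set (dup R I) := {x | ∃ p ∈ P, ∃ i, i ∈ I ∧ i ∈ P ∧ (x : R × R) = (p, p + i)}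
    let P₁ : Set (dup R I) := {x | ∃ p ∈ P, ∃ i ∈ I, (x : R × R) = (p, p + i)}
    let P₂ : Set (dup R I) := {x | ∃ p ∈ P, ∃ i ∈ I, (x : R × R) = (p + i, p)}
    P₁ ≠ P₂ ∧ P₁ ∩ P₂ = P₀ ∧
    ((P.comap (dupFst R I) : Ideal (dup R I)) : Set (dup R I)) = P₁ ∧
    ((P.comap (dupSnd R I) : Ideal (dup R I)) : Set (dup R I)) = P₂ ∧
    Nonempty (Localization.AtPrime (P.comap (dupFst R I)) ≃+* Localization.AtPrime P) ∧
    Nonempty (Localization.AtPrime (P.comap (dupSnd R I)) ≃+* Localization.AtPrime P) := by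
  obtain ⟨a, haI, haP⟩ := SetLike.not_le_iff_exists.mp hIP
  intro P₀ P₁ P₂
  have hP1 : ∀ x : dup R I, x ∈ P₁ ↔ (x : R × R).1 ∈ P := by
    intro x
    constructor
    · rintro ⟨p, hp, i, hi, hx⟩; rw [hx]; exact hp
    · intro hx
      exact ⟨(x : R × R).1, hx, (x : R × R).2 - (x : R × R).1, x.2, by
        simp⟩
  have hP2 : ∀ x : dup R I, x ∈ P₂ ↔ (x : R × R).2 ∈ P := by
    intro x
    constructor
    · rintro ⟨p, hp, i, hi, hx⟩; rw [hx]; exact hp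
    · intro hx
      refine ⟨(x : R × R).2, hx, (x : R × R).1 - (x : R × R).2, ?_, by simp⟩
      simpa using I.neg_mem x.2
  refine ⟨?_, ?_, ?_, ?_, loc_fst a haI haP, loc_snd a haI haP⟩
  · intro h
    have hx : ((0 : R), a) ∈ dup R I := by simpa [mem_dup] using haI
    have h1 : (⟨_, hx⟩ : dup R I) ∈ P₁ := (hP1 _).mpr (by simpa using P.zero_mem)
    rw [h] at h1
    exact haP ((hP2 _).mp h1)
  · ext x
    constructor
    · rintro ⟨h1, h2⟩
      have hx1 := (hP1 x).mp h1
      have hx2 := (hP2 x).mp h2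
      exact ⟨(x : R × R).1, hx1, (x : R × R).2 - (x : R × R).1, x.2,
        P.sub_mem hx2 hx1, by simp⟩
    · rintro ⟨p, hp, i, hiI, hiP, hx⟩
      constructor
      · exact (hP1 x).mpr (by rw [hx]; exact hp)
      · exact (hP2 x).mpr (by rw [hx]; exact P.add_mem hp hiP)
  · ext x; exact (mem_comap_fst).trans (hP1 x).symm
  · ext x; exact (mem_comap_snd).trans (hP2 x).symm

end Paper
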